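/- Let (A,·,‾) be an algebra with involution over a field of characteristic ≠ 2. Then the Steinberg unitary Lie algebra stu₃(A,·,‾) admits an action of the symmetric group S₄ by Lie algebra automorphisms, determined by: τ₁: u₁₂(a) ↦ u₁₂(a), u₂₃(a) ↦ −u₂₃(a), u₃₁(a) ↦ −u₃₁(a); τ₂: u₁₂(a) ↦ −u₁₂(a), u₂₃(a) ↦ u₂₃(a), u₃₁(a) ↦ −u₃₁(a); φ: u₁₂(a) ↦ u₂₃(a), u₂₃(a) ↦ u₃₁(a), u₃₁(a) ↦ u₁₂(a); τ: u₁₂(a) ↦ −u₁₂(ā), u₂₃(a) ↦ −u₃₁(ā), u₃₁(a) ↦ −u₂₃(ā). These assignments respect the defining relations and the generated automorphisms satisfy the S₄ relations. -/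

import Mathlib

/-- Index type for the generators `u_{ij}(a)`, `1 ≤ i ≠ j ≤ 3`, `a ∈ A`. -/
abbrev StuGen (A : Type*) := {p : Fin 3 × Fin 3 // p.1 ≠ p.2} × A

/-- The defining relations of the Steinberg unitary Lie algebra `stu₃(A,·,‾)`:
`u_{ij}(a) = u_{ji}(−ā)`, linearity of `a ↦ u_{ij}(a)`, and
`[u_{ij}(a), u_{jk}(b)] = u_{ik}(a·b)` for distinct `i,j,k`. -/
def stuRels (F : Type*) [Field F] (A : Type*) [AddCommGroup A] [Module F A]
    (mul : A →ₗ[F] A →ₗ[F] A) (bar : A →ₗ[F] A) :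
    Set (FreeLieAlgebra F (StuGen A)) :=
  {z | ∃ (i j : Fin 3) (h : i ≠ j) (a : A),
      z = FreeLieAlgebra.of F ((⟨(i, j), h⟩ : {p : Fin 3 × Fin 3 // p.1 ≠ p.2}), a)
        - FreeLieAlgebra.of F ((⟨(j, i), h.symm⟩ : {p : Fin 3 × Fin 3 // p.1 ≠ p.2}), -(bar a))} ∪
  {z | ∃ (i j : Fin 3) (h : i ≠ j) (a b : A),
      z = FreeLieAlgebra.of F ((⟨(i, j), h⟩ : {p : Fin 3 × Fin 3 // p.1 ≠ p.2}), a + b)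
        - FreeLieAlgebra.of F ((⟨(i, j), h⟩ : {p : Fin 3 × Fin 3 // p.1 ≠ p.2}), a)
        - FreeLieAlgebra.of F ((⟨(i, j), h⟩ : {p : Fin 3 × Fin 3 // p.1 ≠ p.2}), b)} ∪
  {z | ∃ (i j : Fin 3) (h : i ≠ j) (c : F) (a : A),
      z = FreeLieAlgebra.of F ((⟨(i, j), h⟩ : {p : Fin 3 × Fin 3 // p.1 ≠ p.2}), c • a)
        - c • FreeLieAlgebra.of F ((⟨(i, j), h⟩ : {p : Fin 3 × Fin 3 // p.1 ≠ p.2}), a)} ∪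
  {z | ∃ (i j k : Fin 3) (hij : i ≠ j) (hjk : j ≠ k) (hik : i ≠ k) (a b : A),
      z = ⁅FreeLieAlgebra.of F ((⟨(i, j), hij⟩ : {p : Fin 3 × Fin 3 // p.1 ≠ p.2}), a),
           FreeLieAlgebra.of F ((⟨(j, k), hjk⟩ : {p : Fin 3 × Fin 3 // p.1 ≠ p.2}), b)⁆
        - FreeLieAlgebra.of F ((⟨(i, k), hik⟩ : {p : Fin 3 × Fin 3 // p.1 ≠ p.2}), mul a b)}

/-- The ideal of relations. -/
noncomputable def stuIdeal (F : Type*) [Field F] (A : Type*) [AddCommGroup A] [Module F A]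
    (mul : A →ₗ[F] A →ₗ[F] A) (bar : A →ₗ[F] A) :
    LieIdeal F (FreeLieAlgebra F (StuGen A)) :=
  LieSubmodule.lieSpan F (FreeLieAlgebra F (StuGen A)) (stuRels F A mul bar)

/-- The Steinberg unitary Lie algebra `stu₃(A,·,‾)`. -/
abbrev Stu (F : Type*) [Field F] (A : Type*) [AddCommGroup A] [Module F A]
    (mul : A →ₗ[F] A →ₗ[F] A) (bar : A →ₗ[F] A) :=
  FreeLieAlgebra F (StuGen A) ⧸ stuIdeal F A mul bar

/-- The generator `u_{ij}(a)` of `stu₃(A,·,‾)`. -/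
noncomputable def uGen {F : Type*} [Field F] {A : Type*} [AddCommGroup A] [Module F A]
    (mul : A →ₗ[F] A →ₗ[F] A) (bar : A →ₗ[F] A)
    (i j : Fin 3) (h : i ≠ j) (a : A) : Stu F A mul bar :=
  LieSubmodule.Quotient.mk (N := stuIdeal F A mul bar)
    (FreeLieAlgebra.of F ((⟨(i, j), h⟩ : {p : Fin 3 × Fin 3 // p.1 ≠ p.2}), a))


section StuAux

variable {F : Type*} [Field F] {A : Type*} [AddCommGroup A] [Module F A]
  (mul : A →ₗ[F] A →ₗ[F] A) (bar : A →ₗ[F] A)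

/-- The quotient map as a Lie algebra homomorphism. -/
noncomputable def stuMk : FreeLieAlgebra F (StuGen A) →ₗ⁅F⁆ Stu F A mul bar where
  toLinearMap := (stuIdeal F A mul bar).toSubmodule.mkQ
  map_lie' := by
    intro x y
    exact (LieSubmodule.Quotient.mk_bracket (I := stuIdeal F A mul bar) x y).symm

lemma stuMk_apply (x : FreeLieAlgebra F (StuGen A)) :
    stuMk mul bar x = LieSubmodule.Quotient.mk (N := stuIdeal F A mul bar) x := rfl

lemma stuMk_rel_zero {z : FreeLieAlgebra F (StuGen A)} (hz : z ∈ stuRels F A mul bar) :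
    stuMk mul bar z = 0 := by
  rw [stuMk_apply, LieSubmodule.Quotient.mk_eq_zero']
  exact LieSubmodule.subset_lieSpan hz

lemma uGen_symm (i j : Fin 3) (h : i ≠ j) (h' : j ≠ i) (a : A) :
    uGen mul bar i j h a = uGen mul bar j i h' (-(bar a)) := by
  have := stuMk_rel_zero mul bar (Or.inl (Or.inl (Or.inl ⟨i, j, h, a, rfl⟩)))
  rw [map_sub, sub_eq_zero] at this
  exact this

lemma uGen_add (i j : Fin 3) (h : i ≠ j) (a b : A) :
    uGen mul bar i j h (a + b) = uGen mul bar i j h a + uGen mul bar i j h b := by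
  have := stuMk_rel_zero mul bar (Or.inl (Or.inl (Or.inr ⟨i, j, h, a, b, rfl⟩)))
  rw [map_sub, map_sub, sub_sub, sub_eq_zero] at this
  exact this

lemma uGen_smul (i j : Fin 3) (h : i ≠ j) (c : F) (a : A) :
    uGen mul bar i j h (c • a) = c • uGen mul bar i j h a := by
  have := stuMk_rel_zero mul bar (Or.inl (Or.inr ⟨i, j, h, c, a, rfl⟩))
  rw [map_sub, map_smul, sub_eq_zero] at this
  exact this

lemma uGen_neg (i j : Fin 3) (h : i ≠ j) (a : A) :
    uGen mul bar i j h (-a) = -uGen mul bar i j h a := by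
  rw [← neg_one_smul F a, uGen_smul, neg_one_smul]

lemma uGen_lie (i j k : Fin 3) (hij : i ≠ j) (hjk : j ≠ k) (hik : i ≠ k) (a b : A) :
    ⁅uGen mul bar i j hij a, uGen mul bar j k hjk b⁆ = uGen mul bar i k hik (mul a b) := by
  have := stuMk_rel_zero mul bar (Or.inr ⟨i, j, k, hij, hjk, hik, a, b, rfl⟩)
  rw [map_sub, LieHom.map_lie, sub_eq_zero] at this
  exact this

/-- Lift of a map on generators killing the relations, to a Lie algebra endomorphism
of `Stu`. -/
noncomputable def liftStu (g : StuGen A → Stu F A mul bar)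
    (hrel : ∀ z ∈ stuRels F A mul bar, FreeLieAlgebra.lift F g z = 0) :
    Stu F A mul bar →ₗ⁅F⁆ Stu F A mul bar where
  toLinearMap := Submodule.liftQ (stuIdeal F A mul bar).toSubmodule
      (FreeLieAlgebra.lift F g).toLinearMap
      (by
        have hle : stuIdeal F A mul bar ≤ (FreeLieAlgebra.lift F g).ker := by
          refine LieSubmodule.lieSpan_le.mpr ?_
          intro z hz
          exact LieHom.mem_ker.mpr (hrel z hz)
        intro x hx
        rw [LinearMap.mem_ker]
        exact LieHom.mem_ker.mp (hle hx))
  map_lie' := by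
    intro x y
    obtain ⟨x, rfl⟩ := LieSubmodule.Quotient.surjective_mk' (stuIdeal F A mul bar) x
    obtain ⟨y, rfl⟩ := LieSubmodule.Quotient.surjective_mk' (stuIdeal F A mul bar) y
    show FreeLieAlgebra.lift F g ⁅x, y⁆ = ⁅FreeLieAlgebra.lift F g x, FreeLieAlgebra.lift F g y⁆
    exact LieHom.map_lie _ _ _

lemma liftStu_uGen (g : StuGen A → Stu F A mul bar)
    (hrel : ∀ z ∈ stuRels F A mul bar, FreeLieAlgebra.lift F g z = 0)
    (i j : Fin 3) (h : i ≠ j) (a : A) :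
    liftStu mul bar g hrel (uGen mul bar i j h a)
      = g ((⟨(i, j), h⟩ : {p : Fin 3 × Fin 3 // p.1 ≠ p.2}), a) := by
  show FreeLieAlgebra.lift F g (FreeLieAlgebra.of F _) = _
  rw [FreeLieAlgebra.lift_of_apply]

lemma stuExt {f g : Stu F A mul bar →ₗ⁅F⁆ Stu F A mul bar}
    (h : ∀ (i j : Fin 3) (hij : i ≠ j) (a : A),
      f (uGen mul bar i j hij a) = g (uGen mul bar i j hij a)) :
    ∀ z, f z = g z := by
  have key : f.comp (stuMk mul bar) = g.comp (stuMk mul bar) := by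
    apply (FreeLieAlgebra.lift F).symm.injective
    funext p
    obtain ⟨⟨⟨i, j⟩, hij⟩, a⟩ := p
    exact h i j hij a
  intro z
  obtain ⟨x, rfl⟩ := LieSubmodule.Quotient.surjective_mk' (stuIdeal F A mul bar) z
  exact LieHom.congr_fun key x

end StuAux

section StuMaps

variable {F : Type*} [Field F] {A : Type*} [AddCommGroup A] [Module F A]
  (mul : A →ₗ[F] A →ₗ[F] A) (bar : A →ₗ[F] A)

/-- Sign-twist generator map. -/
noncomputable def gSign (ε : Fin 3 → F) : StuGen A → Stu F A mul bar :=
  fun p => (ε p.1.1.1 * ε p.1.1.2) • uGen mul bar p.1.1.1 p.1.1.2 p.1.2 p.2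

lemma gSign_rel (ε : Fin 3 → F) (hε : ∀ j, ε j * ε j = 1) :
    ∀ z ∈ stuRels F A mul bar, FreeLieAlgebra.lift F (gSign mul bar ε) z = 0 := by
  rintro z (((⟨i, j, h, a, rfl⟩ | ⟨i, j, h, a, b, rfl⟩) | ⟨i, j, h, c, a, rfl⟩) |
      ⟨i, j, k, hij, hjk, hik, a, b, rfl⟩) <;>
    simp only [map_sub, map_smul, LieHom.map_lie,
      FreeLieAlgebra.lift_of_apply, gSign]
  · rw [uGen_symm mul bar i j h h.symm a, mul_comm]
    exact sub_self _
  · rw [uGen_add, smul_add]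
    abel
  · rw [uGen_smul, smul_comm]
    exact sub_self _
  · rw [smul_lie, lie_smul, smul_smul, uGen_lie mul bar i j k hij hjk hik]
    have hsc : ε i * ε j * (ε j * ε k) = ε i * ε k := by
      linear_combination ε i * ε k * hε j
    rw [hsc]
    exact sub_self _

/-- Permutation generator map. -/
noncomputable def gPerm (σ : Fin 3 → Fin 3) (hσ : ∀ i j : Fin 3, i ≠ j → σ i ≠ σ j) :
    StuGen A → Stu F A mul bar :=
  fun p => uGen mul bar (σ p.1.1.1) (σ p.1.1.2) (hσ _ _ p.1.2) p.2

lemma gPerm_rel (σ : Fin 3 → Fin 3) (hσ : ∀ i j : Fin 3, i ≠ j → σ i ≠ σ j) :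
    ∀ z ∈ stuRels F A mul bar, FreeLieAlgebra.lift F (gPerm mul bar σ hσ) z = 0 := by
  rintro z (((⟨i, j, h, a, rfl⟩ | ⟨i, j, h, a, b, rfl⟩) | ⟨i, j, h, c, a, rfl⟩) |
      ⟨i, j, k, hij, hjk, hik, a, b, rfl⟩) <;>
    simp only [map_sub, map_smul, LieHom.map_lie,
      FreeLieAlgebra.lift_of_apply, gPerm]
  · rw [uGen_symm mul bar (σ i) (σ j) (hσ i j h) (hσ j i h.symm) a]
    exact sub_self _
  · rw [uGen_add]
    abel
  · rw [uGen_smul]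
    exact sub_self _
  · rw [uGen_lie mul bar (σ i) (σ j) (σ k) (hσ i j hij) (hσ j k hjk) (hσ i k hik)]
    exact sub_self _

/-- Involution-twist generator map. -/
noncomputable def gTau (τ : Fin 3 → Fin 3) (hτ : ∀ i j : Fin 3, i ≠ j → τ i ≠ τ j) :
    StuGen A → Stu F A mul bar :=
  fun p => -uGen mul bar (τ p.1.1.2) (τ p.1.1.1) (hτ _ _ (Ne.symm p.1.2)) (bar p.2)

lemma gTau_rel (hinv : ∀ x, bar (bar x) = x)
    (hanti : ∀ x y, bar (mul x y) = mul (bar y) (bar x))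
    (τ : Fin 3 → Fin 3) (hτ : ∀ i j : Fin 3, i ≠ j → τ i ≠ τ j) :
    ∀ z ∈ stuRels F A mul bar, FreeLieAlgebra.lift F (gTau mul bar τ hτ) z = 0 := by
  rintro z (((⟨i, j, h, a, rfl⟩ | ⟨i, j, h, a, b, rfl⟩) | ⟨i, j, h, c, a, rfl⟩) |
      ⟨i, j, k, hij, hjk, hik, a, b, rfl⟩) <;>
    simp only [map_sub, map_smul, LieHom.map_lie,
      FreeLieAlgebra.lift_of_apply, gTau]
  · rw [map_neg, hinv, uGen_symm mul bar (τ i) (τ j) (hτ i j h) (hτ j i h.symm) (-a),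
      map_neg, neg_neg]
    exact sub_self _
  · rw [map_add, uGen_add]
    abel
  · rw [uGen_smul, smul_neg]
    abel
  · rw [neg_lie, lie_neg, neg_neg, sub_neg_eq_add, ← lie_skew,
      uGen_lie mul bar (τ k) (τ j) (τ i) (hτ j k hjk).symm (hτ i j hij).symm
        (hτ i k hik).symm (bar b) (bar a), ← hanti]
    exact neg_add_cancel _

/-- Sign-twist Lie algebra endomorphism. -/
noncomputable def hSign (ε : Fin 3 → F) (hε : ∀ j, ε j * ε j = 1) :
    Stu F A mul bar →ₗ⁅F⁆ Stu F A mul bar :=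
  liftStu mul bar (gSign mul bar ε) (gSign_rel mul bar ε hε)

lemma hSign_uGen (ε : Fin 3 → F) (hε : ∀ j, ε j * ε j = 1)
    (i j : Fin 3) (h : i ≠ j) (a : A) :
    hSign mul bar ε hε (uGen mul bar i j h a) = (ε i * ε j) • uGen mul bar i j h a :=
  liftStu_uGen mul bar _ _ i j h a

/-- Permutation Lie algebra endomorphism. -/
noncomputable def hPerm (σ : Fin 3 → Fin 3) (hσ : ∀ i j : Fin 3, i ≠ j → σ i ≠ σ j) :
    Stu F A mul bar →ₗ⁅F⁆ Stu F A mul bar :=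
  liftStu mul bar (gPerm mul bar σ hσ) (gPerm_rel mul bar σ hσ)

lemma hPerm_uGen (σ : Fin 3 → Fin 3) (hσ : ∀ i j : Fin 3, i ≠ j → σ i ≠ σ j)
    (i j : Fin 3) (h : i ≠ j) (a : A) :
    hPerm mul bar σ hσ (uGen mul bar i j h a)
      = uGen mul bar (σ i) (σ j) (hσ i j h) a :=
  liftStu_uGen mul bar _ _ i j h a

/-- Involution-twist Lie algebra endomorphism. -/
noncomputable def hTau (hinv : ∀ x, bar (bar x) = x)
    (hanti : ∀ x y, bar (mul x y) = mul (bar y) (bar x))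
    (τ : Fin 3 → Fin 3) (hτ : ∀ i j : Fin 3, i ≠ j → τ i ≠ τ j) :
    Stu F A mul bar →ₗ⁅F⁆ Stu F A mul bar :=
  liftStu mul bar (gTau mul bar τ hτ) (gTau_rel mul bar hinv hanti τ hτ)

lemma hTau_uGen (hinv : ∀ x, bar (bar x) = x)
    (hanti : ∀ x y, bar (mul x y) = mul (bar y) (bar x))
    (τ : Fin 3 → Fin 3) (hτ : ∀ i j : Fin 3, i ≠ j → τ i ≠ τ j)
    (i j : Fin 3) (h : i ≠ j) (a : A) :
    hTau mul bar hinv hanti τ hτ (uGen mul bar i j h a)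
      = -uGen mul bar (τ j) (τ i) (hτ j i h.symm) (bar a) :=
  liftStu_uGen mul bar _ _ i j h a

end StuMaps

section StuRelsLemmas

variable {F : Type*} [Field F] {A : Type*} [AddCommGroup A] [Module F A]
  (mul : A →ₗ[F] A →ₗ[F] A) (bar : A →ₗ[F] A)

lemma hSign_comm (ε ε' : Fin 3 → F) (hε : ∀ j, ε j * ε j = 1) (hε' : ∀ j, ε' j * ε' j = 1) :
    ∀ z, hSign mul bar ε hε (hSign mul bar ε' hε' z)
      = hSign mul bar ε' hε' (hSign mul bar ε hε z) := by
  have h : ∀ w, ((hSign mul bar ε hε).comp (hSign mul bar ε' hε')) w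
      = ((hSign mul bar ε' hε').comp (hSign mul bar ε hε)) w := by
    apply stuExt
    intro i j hij a
    show hSign mul bar ε hε (hSign mul bar ε' hε' (uGen mul bar i j hij a))
      = hSign mul bar ε' hε' (hSign mul bar ε hε (uGen mul bar i j hij a))
    simp only [hSign_uGen, map_smul, smul_smul]
    match_scalars
    ring
  exact fun z => h z

lemma hSign_invol (ε : Fin 3 → F) (hε : ∀ j, ε j * ε j = 1) :
    ∀ z, hSign mul bar ε hε (hSign mul bar ε hε z) = z := by
  have h : ∀ w, ((hSign mul bar ε hε).comp (hSign mul bar ε hε)) w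
      = (LieHom.id : Stu F A mul bar →ₗ⁅F⁆ Stu F A mul bar) w := by
    apply stuExt
    intro i j hij a
    show hSign mul bar ε hε (hSign mul bar ε hε (uGen mul bar i j hij a))
      = uGen mul bar i j hij a
    simp only [hSign_uGen, map_smul, smul_smul]
    match_scalars
    linear_combination (ε i * ε i) * hε j + hε i
  exact fun z => h z

lemma hPerm_cube (σ : Fin 3 → Fin 3) (hσ : ∀ i j : Fin 3, i ≠ j → σ i ≠ σ j)
    (hσ3 : ∀ i, σ (σ (σ i)) = i) :
    ∀ z, hPerm mul bar σ hσ (hPerm mul bar σ hσ (hPerm mul bar σ hσ z)) = z := by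
  have h : ∀ w, ((hPerm mul bar σ hσ).comp
        ((hPerm mul bar σ hσ).comp (hPerm mul bar σ hσ))) w
      = (LieHom.id : Stu F A mul bar →ₗ⁅F⁆ Stu F A mul bar) w := by
    apply stuExt
    intro i j hij a
    show hPerm mul bar σ hσ (hPerm mul bar σ hσ (hPerm mul bar σ hσ (uGen mul bar i j hij a)))
      = uGen mul bar i j hij a
    rw [hPerm_uGen, hPerm_uGen, hPerm_uGen]
    simp only [hσ3]
  exact fun z => h z

lemma hTau_invol (hinv : ∀ x, bar (bar x) = x)
    (hanti : ∀ x y, bar (mul x y) = mul (bar y) (bar x))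
    (τ : Fin 3 → Fin 3) (hτ : ∀ i j : Fin 3, i ≠ j → τ i ≠ τ j)
    (hτ2 : ∀ i, τ (τ i) = i) :
    ∀ z, hTau mul bar hinv hanti τ hτ (hTau mul bar hinv hanti τ hτ z) = z := by
  have h : ∀ w, ((hTau mul bar hinv hanti τ hτ).comp (hTau mul bar hinv hanti τ hτ)) w
      = (LieHom.id : Stu F A mul bar →ₗ⁅F⁆ Stu F A mul bar) w := by
    apply stuExt
    intro i j hij a
    show hTau mul bar hinv hanti τ hτ (hTau mul bar hinv hanti τ hτ (uGen mul bar i j hij a))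
      = uGen mul bar i j hij a
    rw [hTau_uGen, map_neg, hTau_uGen, neg_neg]
    simp only [hτ2, hinv]
  exact fun z => h z

lemma hPerm_hSign (σ : Fin 3 → Fin 3) (hσ : ∀ i j : Fin 3, i ≠ j → σ i ≠ σ j)
    (ε ε' : Fin 3 → F) (hε : ∀ j, ε j * ε j = 1) (hε' : ∀ j, ε' j * ε' j = 1)
    (hc : ∀ i j : Fin 3, i ≠ j → ε i * ε j = ε' (σ i) * ε' (σ j)) :
    ∀ z, hPerm mul bar σ hσ (hSign mul bar ε hε z)
      = hSign mul bar ε' hε' (hPerm mul bar σ hσ z) := by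
  have h : ∀ w, ((hPerm mul bar σ hσ).comp (hSign mul bar ε hε)) w
      = ((hSign mul bar ε' hε').comp (hPerm mul bar σ hσ)) w := by
    apply stuExt
    intro i j hij a
    show hPerm mul bar σ hσ (hSign mul bar ε hε (uGen mul bar i j hij a))
      = hSign mul bar ε' hε' (hPerm mul bar σ hσ (uGen mul bar i j hij a))
    simp only [hSign_uGen, map_smul, hPerm_uGen, smul_smul]
    match_scalars
    linear_combination hc i j hij
  exact fun z => h z

lemma hPerm_hSign' (σ : Fin 3 → Fin 3) (hσ : ∀ i j : Fin 3, i ≠ j → σ i ≠ σ j)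
    (ε ε' ε'' : Fin 3 → F) (hε : ∀ j, ε j * ε j = 1) (hε' : ∀ j, ε' j * ε' j = 1)
    (hε'' : ∀ j, ε'' j * ε'' j = 1)
    (hc : ∀ i j : Fin 3, i ≠ j →
      ε i * ε j = (ε' (σ i) * ε' (σ j)) * (ε'' (σ i) * ε'' (σ j))) :
    ∀ z, hPerm mul bar σ hσ (hSign mul bar ε hε z)
      = hSign mul bar ε' hε' (hSign mul bar ε'' hε'' (hPerm mul bar σ hσ z)) := by
  have h : ∀ w, ((hPerm mul bar σ hσ).comp (hSign mul bar ε hε)) w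
      = ((hSign mul bar ε' hε').comp
          ((hSign mul bar ε'' hε'').comp (hPerm mul bar σ hσ))) w := by
    apply stuExt
    intro i j hij a
    show hPerm mul bar σ hσ (hSign mul bar ε hε (uGen mul bar i j hij a))
      = hSign mul bar ε' hε' (hSign mul bar ε'' hε'' (hPerm mul bar σ hσ (uGen mul bar i j hij a)))
    simp only [hSign_uGen, map_smul, hPerm_uGen, smul_smul]
    match_scalars
    linear_combination hc i j hij
  exact fun z => h z

lemma hSign_hTau (hinv : ∀ x, bar (bar x) = x)
    (hanti : ∀ x y, bar (mul x y) = mul (bar y) (bar x))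
    (τ : Fin 3 → Fin 3) (hτ : ∀ i j : Fin 3, i ≠ j → τ i ≠ τ j)
    (ε : Fin 3 → F) (hε : ∀ j, ε j * ε j = 1)
    (hc : ∀ i j : Fin 3, i ≠ j → ε (τ j) * ε (τ i) = ε i * ε j) :
    ∀ z, hSign mul bar ε hε (hTau mul bar hinv hanti τ hτ z)
      = hTau mul bar hinv hanti τ hτ (hSign mul bar ε hε z) := by
  have h : ∀ w, ((hSign mul bar ε hε).comp (hTau mul bar hinv hanti τ hτ)) w
      = ((hTau mul bar hinv hanti τ hτ).comp (hSign mul bar ε hε)) w := by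
    apply stuExt
    intro i j hij a
    show hSign mul bar ε hε (hTau mul bar hinv hanti τ hτ (uGen mul bar i j hij a))
      = hTau mul bar hinv hanti τ hτ (hSign mul bar ε hε (uGen mul bar i j hij a))
    simp only [hTau_uGen, map_neg, map_smul, hSign_uGen, smul_neg, smul_smul]
    match_scalars
    linear_combination -(hc i j hij)
  exact fun z => h z

lemma hSign_hTau' (hinv : ∀ x, bar (bar x) = x)
    (hanti : ∀ x y, bar (mul x y) = mul (bar y) (bar x))
    (τ : Fin 3 → Fin 3) (hτ : ∀ i j : Fin 3, i ≠ j → τ i ≠ τ j)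
    (ε ε' : Fin 3 → F) (hε : ∀ j, ε j * ε j = 1) (hε' : ∀ j, ε' j * ε' j = 1)
    (hc : ∀ i j : Fin 3, i ≠ j →
      ε (τ j) * ε (τ i) = (ε' (i) * ε' (j)) * (ε (i) * ε (j))) :
    ∀ z, hSign mul bar ε hε (hTau mul bar hinv hanti τ hτ z)
      = hTau mul bar hinv hanti τ hτ (hSign mul bar ε hε (hSign mul bar ε' hε' z)) := by
  have h : ∀ w, ((hSign mul bar ε hε).comp (hTau mul bar hinv hanti τ hτ)) w
      = ((hTau mul bar hinv hanti τ hτ).comp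
          ((hSign mul bar ε hε).comp (hSign mul bar ε' hε'))) w := by
    apply stuExt
    intro i j hij a
    show hSign mul bar ε hε (hTau mul bar hinv hanti τ hτ (uGen mul bar i j hij a))
      = hTau mul bar hinv hanti τ hτ
          (hSign mul bar ε hε (hSign mul bar ε' hε' (uGen mul bar i j hij a)))
    simp only [hTau_uGen, map_neg, map_smul, hSign_uGen, smul_neg, smul_smul]
    match_scalars
    linear_combination -(hc i j hij)
  exact fun z => h z

lemma hTau_hPerm (hinv : ∀ x, bar (bar x) = x)
    (hanti : ∀ x y, bar (mul x y) = mul (bar y) (bar x))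
    (τ : Fin 3 → Fin 3) (hτ : ∀ i j : Fin 3, i ≠ j → τ i ≠ τ j)
    (σ : Fin 3 → Fin 3) (hσ : ∀ i j : Fin 3, i ≠ j → σ i ≠ σ j)
    (hc : ∀ i, τ (σ i) = σ (σ (τ i))) :
    ∀ z, hTau mul bar hinv hanti τ hτ (hPerm mul bar σ hσ z)
      = hPerm mul bar σ hσ (hPerm mul bar σ hσ (hTau mul bar hinv hanti τ hτ z)) := by
  have h : ∀ w, ((hTau mul bar hinv hanti τ hτ).comp (hPerm mul bar σ hσ)) w
      = ((hPerm mul bar σ hσ).comp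
          ((hPerm mul bar σ hσ).comp (hTau mul bar hinv hanti τ hτ))) w := by
    apply stuExt
    intro i j hij a
    show hTau mul bar hinv hanti τ hτ (hPerm mul bar σ hσ (uGen mul bar i j hij a))
      = hPerm mul bar σ hσ
          (hPerm mul bar σ hσ (hTau mul bar hinv hanti τ hτ (uGen mul bar i j hij a)))
    rw [hPerm_uGen, hTau_uGen, hTau_uGen, map_neg, map_neg, hPerm_uGen, hPerm_uGen]
    simp only [hc]
  exact fun z => h z

end StuRelsLemmas

/-- For any algebra with involution `(A,·,‾)` over a field of characteristic `≠ 2`,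
the Steinberg unitary Lie algebra `stu₃(A,·,‾)` admits an action of `S₄` by Lie
algebra automorphisms, determined on the generators by the prescribed formulas,
the generated automorphisms satisfying the `S₄` relations. -/
theorem stmt16 (F : Type*) [Field F] (hchar : (2 : F) ≠ 0)
    (A : Type*) [AddCommGroup A] [Module F A]
    (mul : A →ₗ[F] A →ₗ[F] A) (bar : A →ₗ[F] A)
    (hinv : ∀ x, bar (bar x) = x)
    (hanti : ∀ x y, bar (mul x y) = mul (bar y) (bar x)) :
    ∃ T₁ T₂ Φ T : Stu F A mul bar ≃ₗ⁅F⁆ Stu F A mul bar,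
      (∀ a : A, T₁ (uGen mul bar 0 1 (by decide) a) = uGen mul bar 0 1 (by decide) a) ∧
      (∀ a : A, T₁ (uGen mul bar 1 2 (by decide) a) = -uGen mul bar 1 2 (by decide) a) ∧
      (∀ a : A, T₁ (uGen mul bar 2 0 (by decide) a) = -uGen mul bar 2 0 (by decide) a) ∧
      (∀ a : A, T₂ (uGen mul bar 0 1 (by decide) a) = -uGen mul bar 0 1 (by decide) a) ∧
      (∀ a : A, T₂ (uGen mul bar 1 2 (by decide) a) = uGen mul bar 1 2 (by decide) a) ∧
      (∀ a : A, T₂ (uGen mul bar 2 0 (by decide) a) = -uGen mul bar 2 0 (by decide) a) ∧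
      (∀ a : A, Φ (uGen mul bar 0 1 (by decide) a) = uGen mul bar 1 2 (by decide) a) ∧
      (∀ a : A, Φ (uGen mul bar 1 2 (by decide) a) = uGen mul bar 2 0 (by decide) a) ∧
      (∀ a : A, Φ (uGen mul bar 2 0 (by decide) a) = uGen mul bar 0 1 (by decide) a) ∧
      (∀ a : A, T (uGen mul bar 0 1 (by decide) a) = -uGen mul bar 0 1 (by decide) (bar a)) ∧
      (∀ a : A, T (uGen mul bar 1 2 (by decide) a) = -uGen mul bar 2 0 (by decide) (bar a)) ∧
      (∀ a : A, T (uGen mul bar 2 0 (by decide) a) = -uGen mul bar 1 2 (by decide) (bar a)) ∧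
      (∀ z, T₁ (T₁ z) = z) ∧ (∀ z, T₂ (T₂ z) = z) ∧ (∀ z, T (T z) = z) ∧
      (∀ z, Φ (Φ (Φ z)) = z) ∧
      (∀ z, T₁ (T₂ z) = T₂ (T₁ z)) ∧
      (∀ z, Φ (T₁ z) = T₂ (Φ z)) ∧
      (∀ z, Φ (T₂ z) = T₁ (T₂ (Φ z))) ∧
      (∀ z, T₁ (T z) = T (T₁ z)) ∧
      (∀ z, T₂ (T z) = T (T₂ (T₁ z))) ∧
      (∀ z, T (Φ z) = Φ (Φ (T z))) := by
  have hε₁ : ∀ j : Fin 3, (![1, 1, -1] : Fin 3 → F) j * (![1, 1, -1] : Fin 3 → F) j = 1 := by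
    intro j; fin_cases j <;> norm_num
  have hε₂ : ∀ j : Fin 3, (![-1, 1, 1] : Fin 3 → F) j * (![-1, 1, 1] : Fin 3 → F) j = 1 := by
    intro j; fin_cases j <;> norm_num
  have hσ : ∀ i j : Fin 3, i ≠ j →
      (![1, 2, 0] : Fin 3 → Fin 3) i ≠ (![1, 2, 0] : Fin 3 → Fin 3) j := by decide
  have hτ : ∀ i j : Fin 3, i ≠ j →
      (![1, 0, 2] : Fin 3 → Fin 3) i ≠ (![1, 0, 2] : Fin 3 → Fin 3) j := by decide
  have hσ3 : ∀ i, (![1, 2, 0] : Fin 3 → Fin 3) (![1, 2, 0] (![1, 2, 0] i)) = i := by decide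
  have hτ2 : ∀ i, (![1, 0, 2] : Fin 3 → Fin 3) (![1, 0, 2] i) = i := by decide
  refine ⟨⟨hSign mul bar ![1, 1, -1] hε₁, hSign mul bar ![1, 1, -1] hε₁,
      hSign_invol mul bar _ hε₁, hSign_invol mul bar _ hε₁⟩,
    ⟨hSign mul bar ![-1, 1, 1] hε₂, hSign mul bar ![-1, 1, 1] hε₂,
      hSign_invol mul bar _ hε₂, hSign_invol mul bar _ hε₂⟩,
    ⟨hPerm mul bar ![1, 2, 0] hσ,
      fun z => hPerm mul bar ![1, 2, 0] hσ (hPerm mul bar ![1, 2, 0] hσ z),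
      hPerm_cube mul bar _ hσ hσ3, hPerm_cube mul bar _ hσ hσ3⟩,
    ⟨hTau mul bar hinv hanti ![1, 0, 2] hτ, hTau mul bar hinv hanti ![1, 0, 2] hτ,
      hTau_invol mul bar hinv hanti _ hτ hτ2, hTau_invol mul bar hinv hanti _ hτ hτ2⟩,
    ?_, ?_, ?_, ?_, ?_, ?_, ?_, ?_, ?_, ?_, ?_, ?_,
    hSign_invol mul bar _ hε₁, hSign_invol mul bar _ hε₂,
    hTau_invol mul bar hinv hanti _ hτ hτ2, hPerm_cube mul bar _ hσ hσ3,
    hSign_comm mul bar _ _ hε₁ hε₂,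
    hPerm_hSign mul bar _ hσ _ _ hε₁ hε₂ ?_,
    hPerm_hSign' mul bar _ hσ _ _ _ hε₂ hε₁ hε₂ ?_,
    hSign_hTau mul bar hinv hanti _ hτ _ hε₁ ?_,
    hSign_hTau' mul bar hinv hanti _ hτ _ _ hε₂ hε₁ ?_,
    hTau_hPerm mul bar hinv hanti _ hτ _ hσ (by decide)⟩
  · intro a
    show hSign mul bar ![1, 1, -1] hε₁ (uGen mul bar 0 1 (by decide) a)
      = uGen mul bar 0 1 (by decide) a
    rw [hSign_uGen]; norm_num
  · intro a
    show hSign mul bar ![1, 1, -1] hε₁ (uGen mul bar 1 2 (by decide) a)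
      = -uGen mul bar 1 2 (by decide) a
    rw [hSign_uGen]; norm_num [Matrix.cons_val_two, Matrix.tail_cons, Matrix.head_cons]
  · intro a
    show hSign mul bar ![1, 1, -1] hε₁ (uGen mul bar 2 0 (by decide) a)
      = -uGen mul bar 2 0 (by decide) a
    rw [hSign_uGen]; norm_num [Matrix.cons_val_two, Matrix.tail_cons, Matrix.head_cons]
  · intro a
    show hSign mul bar ![-1, 1, 1] hε₂ (uGen mul bar 0 1 (by decide) a)
      = -uGen mul bar 0 1 (by decide) a
    rw [hSign_uGen]; norm_num
  · intro a
    show hSign mul bar ![-1, 1, 1] hε₂ (uGen mul bar 1 2 (by decide) a)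
      = uGen mul bar 1 2 (by decide) a
    rw [hSign_uGen]; norm_num [Matrix.cons_val_two, Matrix.tail_cons, Matrix.head_cons]
  · intro a
    show hSign mul bar ![-1, 1, 1] hε₂ (uGen mul bar 2 0 (by decide) a)
      = -uGen mul bar 2 0 (by decide) a
    rw [hSign_uGen]; norm_num [Matrix.cons_val_two, Matrix.tail_cons, Matrix.head_cons]
  · intro a
    show hPerm mul bar ![1, 2, 0] hσ (uGen mul bar 0 1 (by decide) a)
      = uGen mul bar 1 2 (by decide) a
    rw [hPerm_uGen]; norm_num
  · intro a
    show hPerm mul bar ![1, 2, 0] hσ (uGen mul bar 1 2 (by decide) a)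
      = uGen mul bar 2 0 (by decide) a
    rw [hPerm_uGen]; norm_num [Matrix.cons_val_two, Matrix.tail_cons, Matrix.head_cons]
  · intro a
    show hPerm mul bar ![1, 2, 0] hσ (uGen mul bar 2 0 (by decide) a)
      = uGen mul bar 0 1 (by decide) a
    rw [hPerm_uGen]; norm_num [Matrix.cons_val_two, Matrix.tail_cons, Matrix.head_cons]
  · intro a
    show hTau mul bar hinv hanti ![1, 0, 2] hτ (uGen mul bar 0 1 (by decide) a)
      = -uGen mul bar 0 1 (by decide) (bar a)
    rw [hTau_uGen]; norm_num
  · intro a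
    show hTau mul bar hinv hanti ![1, 0, 2] hτ (uGen mul bar 1 2 (by decide) a)
      = -uGen mul bar 2 0 (by decide) (bar a)
    rw [hTau_uGen]; norm_num [Matrix.cons_val_two, Matrix.tail_cons, Matrix.head_cons]
  · intro a
    show hTau mul bar hinv hanti ![1, 0, 2] hτ (uGen mul bar 2 0 (by decide) a)
      = -uGen mul bar 1 2 (by decide) (bar a)
    rw [hTau_uGen]; norm_num [Matrix.cons_val_two, Matrix.tail_cons, Matrix.head_cons]
  · intro i j _
    fin_cases i <;> fin_cases j <;> norm_num [Matrix.cons_val_two, Matrix.tail_cons, Matrix.head_cons]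
  · intro i j _
    fin_cases i <;> fin_cases j <;> norm_num [Matrix.cons_val_two, Matrix.tail_cons, Matrix.head_cons]
  · intro i j _
    fin_cases i <;> fin_cases j <;> norm_num [Matrix.cons_val_two, Matrix.tail_cons, Matrix.head_cons]
  · intro i j _
    fin_cases i <;> fin_cases j <;> norm_num [Matrix.cons_val_two, Matrix.tail_cons, Matrix.head_cons]
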